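/- If G is a quasi-threshold graph, then its proper orientation number equals its clique number minus one, i.e. χ⃗(G) = ω(G) − 1. -/

import Mathlib

open SimpleGraph

structure Orient {V : Type*} (G : SimpleGraph V) where
  dir : V → V → Bool
  adj_of_dir : ∀ u v, dir u v = true → G.Adj u v
  dir_iff : ∀ u v, G.Adj u v → (dir u v = true ↔ ¬ dir v u = true)

def Orient.inDeg {V : Type*} [Fintype V] {G : SimpleGraph V} (D : Orient G) (v : V) : ℕ :=
  (Finset.univ.filter (fun u => D.dir u v = true)).card

def Orient.Proper {V : Type*} [Fintype V] {G : SimpleGraph V} (D : Orient G) : Prop :=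
  ∀ u v, G.Adj u v → D.inDeg u ≠ D.inDeg v

noncomputable def properOrientNum {V : Type*} [Fintype V] (G : SimpleGraph V) : ℕ :=
  sInf {k | ∃ D : Orient G, D.Proper ∧ ∀ v, D.inDeg v ≤ k}

/-- The join of a single new vertex with a graph `G`: the new vertex (`none`)
is adjacent to all vertices of `G`. -/
def coneJoin {V : Type} (G : SimpleGraph V) : SimpleGraph (Option V) where
  Adj x y :=
    match x, y with
    | none, some _ => True
    | some _, none => True
    | some a, some b => G.Adj a b
    | none, none => False
  symm := by
    constructor
    rintro (_ | a) (_ | b) h <;> simp_all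
    exact h.symm
  loopless := by
    constructor
    rintro (_ | a) h <;> simp_all

/-- Quasi-threshold graphs: `K1` is quasi-threshold, and the class is closed under
disjoint unions, joins with a single new vertex, and isomorphism. -/
inductive IsQuasiThreshold : {V : Type} → SimpleGraph V → Prop where
  | single : IsQuasiThreshold (⊥ : SimpleGraph (Fin 1))
  | union {V W : Type} {G : SimpleGraph V} {H : SimpleGraph W} :
      IsQuasiThreshold G → IsQuasiThreshold H → IsQuasiThreshold (G ⊕g H)
  | cone {V : Type} {G : SimpleGraph V} :
      IsQuasiThreshold G → IsQuasiThreshold (coneJoin G)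
  | iso {V W : Type} {G : SimpleGraph V} {H : SimpleGraph W} :
      IsQuasiThreshold G → G ≃g H → IsQuasiThreshold H

/-! ### Auxiliary lemmas -/

lemma Orient.inDeg_eq {V : Type*} [Fintype V] {G : SimpleGraph V} (D : Orient G) (v : V) :
    D.inDeg v = Fintype.card {u // D.dir u v = true} := by
  rw [Fintype.card_subtype]; rfl

lemma IsQuasiThreshold.nonempty {V : Type} {G : SimpleGraph V}
    (h : IsQuasiThreshold G) : Nonempty V := by
  induction h with
  | single => exact ⟨0⟩
  | union hG hH ihG ihH => exact ⟨Sum.inl ihG.some⟩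
  | cone hG ih => exact ⟨none⟩
  | iso hG e ih => exact ⟨e ih.some⟩

/-- Clique number is monotone under graph embeddings (of finite graphs). -/
lemma cliqueNum_le_of_emb {α β : Type*} [Fintype α] [Fintype β]
    {G : SimpleGraph α} {H : SimpleGraph β} (f : G ↪g H) :
    G.cliqueNum ≤ H.cliqueNum := by
  obtain ⟨s, hs⟩ := G.exists_isNClique_cliqueNum
  have hc : H.IsClique ↑(s.map f.toEmbedding) := by
    intro x hx y hy hxy
    simp only [Finset.coe_map, Set.mem_image, Finset.mem_coe] at hx hy
    obtain ⟨a, ha, rfl⟩ := hx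
    obtain ⟨b, hb, rfl⟩ := hy
    have hab : a ≠ b := fun h => hxy (by rw [h])
    exact f.map_rel_iff.mpr (hs.1 ha hb hab)
  have := IsClique.card_le_cliqueNum (tc := hc)
  rwa [Finset.card_map, hs.2] at this

lemma one_le_cliqueNum {α : Type*} [Fintype α] [Nonempty α] (G : SimpleGraph α) :
    1 ≤ G.cliqueNum := by
  have hc : G.IsClique ({Classical.arbitrary α} : Finset α) := by simp
  have := IsClique.card_le_cliqueNum (tc := hc)
  simpa using this

lemma cliqueNum_cone {V : Type} [Fintype V] (G : SimpleGraph V) :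
    G.cliqueNum + 1 ≤ (coneJoin G).cliqueNum := by
  classical
  obtain ⟨s, hs⟩ := G.exists_isNClique_cliqueNum
  have hnone : (none : Option V) ∉ s.map ⟨some, Option.some_injective V⟩ := by
    simp
  have hc : (coneJoin G).IsClique ↑(insert (none : Option V)
      (s.map ⟨some, Option.some_injective V⟩)) := by
    intro x hx y hy hxy
    simp only [Finset.coe_insert, Set.mem_insert_iff, Finset.coe_map, Set.mem_image,
      Finset.mem_coe, Function.Embedding.coeFn_mk] at hx hy
    rcases hx with rfl | ⟨a, ha, rfl⟩ <;> rcases hy with rfl | ⟨b, hb, rfl⟩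
    · exact absurd rfl hxy
    · exact trivial
    · exact trivial
    · have hab : a ≠ b := fun h => hxy (by rw [h])
      exact hs.1 ha hb hab
  have := IsClique.card_le_cliqueNum (tc := hc)
  rwa [Finset.card_insert_of_notMem hnone, Finset.card_map, hs.2] at this

/-! ### Orientation constructions -/

/-- Orientation of a disjoint sum. -/
def Orient.sum {V W : Type} {G : SimpleGraph V} {H : SimpleGraph W}
    (DG : Orient G) (DH : Orient H) : Orient (G ⊕g H) where
  dir x y := match x, y with
    | Sum.inl a, Sum.inl b => DG.dir a b
    | Sum.inr a, Sum.inr b => DH.dir a b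
    | _, _ => false
  adj_of_dir := by
    rintro (a | a) (b | b) h
    · exact DG.adj_of_dir a b h
    · simp at h
    · simp at h
    · exact DH.adj_of_dir a b h
  dir_iff := by
    rintro (a | a) (b | b) h
    · exact DG.dir_iff a b h
    · simp at h
    · simp at h
    · exact DH.dir_iff a b h

lemma Orient.sum_inDeg_inl {V W : Type} [Fintype (V ⊕ W)] [Fintype V] [Fintype W]
    {G : SimpleGraph V} {H : SimpleGraph W} (DG : Orient G) (DH : Orient H) (a : V) :
    (DG.sum DH).inDeg (Sum.inl a) = DG.inDeg a := by
  rw [Orient.inDeg_eq, Orient.inDeg_eq]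
  rw [Fintype.card_congr (Equiv.subtypeSum
    (p := fun u => (DG.sum DH).dir u (Sum.inl a) = true))]
  rw [Fintype.card_sum]
  have : Fintype.card {b : W // (DG.sum DH).dir (Sum.inr b) (Sum.inl a) = true} = 0 := by
    apply Fintype.card_eq_zero_iff.mpr
    constructor
    rintro ⟨b, hb⟩
    simp [Orient.sum] at hb
  rw [this, Nat.add_zero]
  rfl

lemma Orient.sum_inDeg_inr {V W : Type} [Fintype (V ⊕ W)] [Fintype V] [Fintype W]
    {G : SimpleGraph V} {H : SimpleGraph W} (DG : Orient G) (DH : Orient H) (b : W) :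
    (DG.sum DH).inDeg (Sum.inr b) = DH.inDeg b := by
  rw [Orient.inDeg_eq, Orient.inDeg_eq]
  rw [Fintype.card_congr (Equiv.subtypeSum
    (p := fun u => (DG.sum DH).dir u (Sum.inr b) = true))]
  rw [Fintype.card_sum]
  have : Fintype.card {a : V // (DG.sum DH).dir (Sum.inl a) (Sum.inr b) = true} = 0 := by
    apply Fintype.card_eq_zero_iff.mpr
    constructor
    rintro ⟨a, ha⟩
    simp [Orient.sum] at ha
  rw [this, Nat.zero_add]
  rfl

/-- Orientation of a cone: all edges from the apex point away from it. -/
def Orient.cone {V : Type} {G : SimpleGraph V} (D : Orient G) : Orient (coneJoin G) where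
  dir x y := match x, y with
    | none, some _ => true
    | some a, some b => D.dir a b
    | _, _ => false
  adj_of_dir := by
    rintro (_ | a) (_ | b) h
    · simp at h
    · exact trivial
    · simp at h
    · exact D.adj_of_dir a b h
  dir_iff := by
    rintro (_ | a) (_ | b) h
    · exact h.elim
    · simp
    · simp
    · exact D.dir_iff a b h

lemma Orient.cone_inDeg_none {V : Type} [Fintype (Option V)] {G : SimpleGraph V} (D : Orient G) :
    D.cone.inDeg (none : Option V) = 0 := by
  rw [Orient.inDeg_eq]
  apply Fintype.card_eq_zero_iff.mpr
  constructor
  rintro ⟨(_ | u), hu⟩ <;> simp [Orient.cone] at hu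

lemma Orient.cone_inDeg_some {V : Type} [Fintype (Option V)] [Fintype V] {G : SimpleGraph V} (D : Orient G) (v : V) :
    D.cone.inDeg (some v) = D.inDeg v + 1 := by
  rw [Orient.inDeg_eq, Orient.inDeg_eq]
  have e : {u : Option V // D.cone.dir u (some v) = true} ≃
      Option {u : V // D.dir u v = true} :=
    { toFun := fun x => match x with
        | ⟨none, _⟩ => none
        | ⟨some u, hu⟩ => some ⟨u, hu⟩
      invFun := fun x => match x with
        | none => ⟨none, rfl⟩
        | some ⟨u, hu⟩ => ⟨some u, hu⟩
      left_inv := by rintro ⟨(_ | u), hu⟩ <;> rfl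
      right_inv := by rintro (_ | ⟨u, hu⟩) <;> rfl }
  rw [Fintype.card_congr e, Fintype.card_option]

/-- Transport an orientation along a graph isomorphism. -/
def Orient.congr {V W : Type} {G : SimpleGraph V} {H : SimpleGraph W}
    (e : G ≃g H) (D : Orient G) : Orient H where
  dir x y := D.dir (e.symm x) (e.symm y)
  adj_of_dir := fun u v h => e.symm.map_adj_iff.mp (D.adj_of_dir _ _ h)
  dir_iff := fun u v h => D.dir_iff _ _ (e.symm.map_adj_iff.mpr h)

lemma Orient.congr_inDeg {V W : Type} [Fintype V] [Fintype W]
    {G : SimpleGraph V} {H : SimpleGraph W} (e : G ≃g H) (D : Orient G) (w : W) :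
    (D.congr e).inDeg w = D.inDeg (e.symm w) := by
  rw [Orient.inDeg_eq, Orient.inDeg_eq]
  exact Fintype.card_congr ((e.toEquiv.symm).subtypeEquiv (fun u => Iff.rfl))

/-- The empty orientation of the empty graph. -/
def Orient.botOrient (V : Type) : Orient (⊥ : SimpleGraph V) where
  dir _ _ := false
  adj_of_dir := by intro u v h; simp at h
  dir_iff := by intro u v h; exact h.elim

lemma Orient.botOrient_inDeg (V : Type) [Fintype V] (v : V) :
    (Orient.botOrient V).inDeg v = 0 := by
  rw [Orient.inDeg_eq]
  apply Fintype.card_eq_zero_iff.mpr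
  exact ⟨fun x => by have := x.2; simp [Orient.botOrient] at this⟩

/-! ### Main existence lemma -/

lemma exists_good {V : Type} {G : SimpleGraph V} (h : IsQuasiThreshold G) :
    ∀ (_ : Fintype V), ∃ D : Orient G, D.Proper ∧ ∀ v, D.inDeg v ≤ G.cliqueNum - 1 := by
  induction h with
  | single =>
    intro inst
    refine ⟨Orient.botOrient (Fin 1), ?_, ?_⟩
    · intro u v huv; exact absurd huv (by simp)
    · intro v
      rw [Orient.botOrient_inDeg]
      omega
  | @union V W G H hG hH ihG ihH =>
    intro inst
    haveI : Fintype V := Fintype.ofInjective (Sum.inl : V → V ⊕ W) Sum.inl_injective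
    haveI : Fintype W := Fintype.ofInjective (Sum.inr : W → V ⊕ W) Sum.inr_injective
    obtain ⟨DG, hDGp, hDGb⟩ := ihG inferInstance
    obtain ⟨DH, hDHp, hDHb⟩ := ihH inferInstance
    have hemb1 : G.cliqueNum ≤ (G ⊕g H).cliqueNum := cliqueNum_le_of_emb Embedding.sumInl
    have hemb2 : H.cliqueNum ≤ (G ⊕g H).cliqueNum := cliqueNum_le_of_emb Embedding.sumInr
    refine ⟨DG.sum DH, ?_, ?_⟩
    · rintro (a | a) (b | b) hab
      · rw [Orient.sum_inDeg_inl, Orient.sum_inDeg_inl]; exact hDGp a b hab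
      · simp at hab
      · simp at hab
      · rw [Orient.sum_inDeg_inr, Orient.sum_inDeg_inr]; exact hDHp a b hab
    · rintro (a | b)
      · rw [Orient.sum_inDeg_inl]
        exact le_trans (hDGb a) (by omega)
      · rw [Orient.sum_inDeg_inr]
        exact le_trans (hDHb b) (by omega)
  | @cone V G hG ih =>
    intro inst
    haveI : Fintype V := Fintype.ofInjective some (Option.some_injective V)
    haveI : Nonempty V := hG.nonempty
    obtain ⟨D, hDp, hDb⟩ := ih inferInstance
    have h1 : 1 ≤ G.cliqueNum := one_le_cliqueNum G
    have h2 : G.cliqueNum + 1 ≤ (coneJoin G).cliqueNum := cliqueNum_cone G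
    refine ⟨D.cone, ?_, ?_⟩
    · rintro (_ | a) (_ | b) hab
      · exact absurd hab (by simp [coneJoin])
      · rw [Orient.cone_inDeg_none, Orient.cone_inDeg_some]; omega
      · rw [Orient.cone_inDeg_none, Orient.cone_inDeg_some]; omega
      · rw [Orient.cone_inDeg_some, Orient.cone_inDeg_some]
        have : G.Adj a b := hab
        have := hDp a b this
        omega
    · rintro (_ | v)
      · rw [Orient.cone_inDeg_none]; omega
      · rw [Orient.cone_inDeg_some]
        have := hDb v
        omega
  | @iso V W G H hG e ih =>
    intro inst
    haveI : Fintype V := Fintype.ofEquiv W e.toEquiv.symm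
    obtain ⟨D, hDp, hDb⟩ := ih inferInstance
    have hcl : G.cliqueNum ≤ H.cliqueNum := cliqueNum_le_of_emb e.toEmbedding
    refine ⟨D.congr e, ?_, ?_⟩
    · intro u v huv
      rw [Orient.congr_inDeg, Orient.congr_inDeg]
      exact hDp _ _ (e.symm.map_adj_iff.mpr huv)
    · intro v
      rw [Orient.congr_inDeg]
      exact le_trans (hDb _) (by omega)

lemma lower_bound {V : Type} [Fintype V] {G : SimpleGraph V} {D : Orient G}
    (hP : D.Proper) {k : ℕ} (hk : ∀ v, D.inDeg v ≤ k) : G.cliqueNum ≤ k + 1 := by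
  obtain ⟨s, hs⟩ := G.exists_isNClique_cliqueNum
  rw [← hs.2]
  have hinj : Set.InjOn D.inDeg ↑s := by
    intro a ha b hb hab
    by_contra hne
    exact hP a b (hs.1 ha hb hne) hab
  calc s.card = (s.image D.inDeg).card := (Finset.card_image_of_injOn hinj).symm
    _ ≤ (Finset.range (k + 1)).card := by
        apply Finset.card_le_card
        intro n hn
        simp only [Finset.mem_image] at hn
        obtain ⟨v, _, rfl⟩ := hn
        simp only [Finset.mem_range]
        exact Nat.lt_succ_of_le (hk v)
    _ = k + 1 := Finset.card_range _

/-- If `G` is a quasi-threshold graph, then `χ⃗(G) = ω(G) - 1`. -/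
theorem properOrientNum_quasiThreshold {V : Type} [Fintype V] (G : SimpleGraph V)
    (h : IsQuasiThreshold G) : properOrientNum G = G.cliqueNum - 1 := by
  obtain ⟨D, hDp, hDb⟩ := exists_good h inferInstance
  have hmem : G.cliqueNum - 1 ∈ {k | ∃ D : Orient G, D.Proper ∧ ∀ v, D.inDeg v ≤ k} :=
    ⟨D, hDp, hDb⟩
  apply le_antisymm
  · exact Nat.sInf_le hmem
  · apply le_csInf ⟨_, hmem⟩
    rintro k ⟨D', hD'p, hD'b⟩
    have := lower_bound hD'p hD'b
    omega
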